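/- (Lemma 2) Fix N ≥ 1, B > 0, T > 0 and, for each i, reals 0 < a_{i1} ≤ a_{i2} and d_{i1}, d_{i2} ≥ 0 with d_{11} + d_{12} > 0. Suppose t ∈ ℝ^N has t_i > 0 for all i and Σ_{i=1}^N t_i < T. Define t̄ by t̄_1 = T − Σ_{i=2}^N t_i and t̄_i = t_i for i ≥ 2. Then t̄_i > 0 for all i, Σ_{i=1}^N t̄_i = T, and Σ_{i=1}^N g_i(t̄_i) < Σ_{i=1}^N g_i(t_i), where g_i(s) = B·s·(a_{i1}·2^((d_{i1}+d_{i2})/(B·s)) + (a_{i2} − a_{i1})·2^(d_{i2}/(B·s)) − a_{i2}). Consequently any time allocation with Σ t_i < T is not optimal for the total energy minimization, i.e., it is optimal to transmit with the maximal time Σ t_i = T. -/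

import Mathlib

/-- slope of exp through 0 is strictly monotone -/
lemma exp_slope_mono {u v : ℝ} (hu : 0 < u) (huv : u < v) :
    (Real.exp u - 1) / u < (Real.exp v - 1) / v := by
  have := strictConvexOn_exp.secant_strict_mono (a := 0) (x := u) (y := v)
    (Set.mem_univ _) (Set.mem_univ _) (Set.mem_univ _) (ne_of_gt hu)
    (ne_of_gt (hu.trans huv)) huv
  simpa [Real.exp_zero] using this

/-- key monotonicity: `s ↦ s * (2^(x/s) - 1)` is strictly decreasing for `x > 0`. -/
lemma key_lt {x s s' : ℝ} (hx : 0 < x) (hs : 0 < s) (hss : s < s') :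
    s' * ((2:ℝ) ^ (x / s') - 1) < s * ((2:ℝ) ^ (x / s) - 1) := by
  have hs' : 0 < s' := hs.trans hss
  have hlog2 : 0 < Real.log 2 := Real.log_pos (by norm_num)
  set u : ℝ := Real.log 2 * (x / s') with hu
  set v : ℝ := Real.log 2 * (x / s) with hv
  have hupos : 0 < u := mul_pos hlog2 (div_pos hx hs')
  have hvpos : 0 < v := mul_pos hlog2 (div_pos hx hs)
  have huv : u < v := by
    apply mul_lt_mul_of_pos_left _ hlog2
    exact div_lt_div_of_pos_left hx hs hss
  have h1 : (2:ℝ) ^ (x / s') = Real.exp u := Real.rpow_def_of_pos (by norm_num) _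
  have h2 : (2:ℝ) ^ (x / s) = Real.exp v := Real.rpow_def_of_pos (by norm_num) _
  rw [h1, h2]
  have hslope := exp_slope_mono hupos huv
  have e1 : s' * (Real.exp u - 1) = (Real.log 2 * x) * ((Real.exp u - 1) / u) := by
    field_simp [hu]
    have hsu : s' * u = Real.log 2 * x := by rw [hu]; field_simp
    linear_combination (Real.exp u - 1) * hsu
  have e2 : s * (Real.exp v - 1) = (Real.log 2 * x) * ((Real.exp v - 1) / v) := by
    field_simp [hv]
    have hsv : s * v = Real.log 2 * x := by rw [hv]; field_simp
    linear_combination (Real.exp v - 1) * hsv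
  rw [e1, e2]
  exact mul_lt_mul_of_pos_left hslope (mul_pos hlog2 hx)

lemma key_le {x s s' : ℝ} (hx : 0 ≤ x) (hs : 0 < s) (hss : s < s') :
    s' * ((2:ℝ) ^ (x / s') - 1) ≤ s * ((2:ℝ) ^ (x / s) - 1) := by
  rcases eq_or_lt_of_le hx with h | h
  · simp [← h]
  · exact (key_lt h hs hss).le

/-- Lemma 2: if the time allocation `t` satisfies `Σᵢ tᵢ < T`, then
enlarging the time of group 1 to `t̄₁ = T − Σ_{i≥2} tᵢ` (keeping the others) gives a
feasible allocation using the full time `T` with strictly smaller total offloading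
energy; hence it is optimal to transmit with the maximal time `Σᵢ tᵢ = T`. -/
theorem stmt_10 (N : ℕ) (hN : 1 ≤ N) (B T : ℝ) (hB : 0 < B) (hT : 0 < T)
    (a₁ a₂ : Fin N → ℝ) (d : Fin N → Fin 2 → ℝ)
    (ha₁ : ∀ i, 0 < a₁ i) (h12 : ∀ i, a₁ i ≤ a₂ i) (hd : ∀ i j, 0 ≤ d i j)
    (hd1 : 0 < d ⟨0, hN⟩ 0 + d ⟨0, hN⟩ 1)
    (g : Fin N → ℝ → ℝ)
    (hg : ∀ i (s : ℝ), g i s =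
      B * s * (a₁ i * (2 : ℝ) ^ ((d i 0 + d i 1) / (B * s))
        + (a₂ i - a₁ i) * (2 : ℝ) ^ (d i 1 / (B * s)) - a₂ i))
    (t : Fin N → ℝ) (ht : ∀ i, 0 < t i) (hsum : ∑ i, t i < T)
    (tbar : Fin N → ℝ)
    (htbar0 : tbar ⟨0, hN⟩ = T - ∑ i ∈ Finset.univ.erase ⟨0, hN⟩, t i)
    (htbar : ∀ i, i ≠ (⟨0, hN⟩ : Fin N) → tbar i = t i) :
    (∀ i, 0 < tbar i) ∧ (∑ i, tbar i = T) ∧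
      ∑ i, g i (tbar i) < ∑ i, g i (t i) := by
  set i0 : Fin N := ⟨0, hN⟩ with hi0
  have hsplit_t : t i0 + ∑ i ∈ Finset.univ.erase i0, t i = ∑ i, t i :=
    Finset.add_sum_erase _ t (Finset.mem_univ i0)
  have hgt : t i0 < tbar i0 := by
    rw [htbar0]; linarith
  have htbar_pos : ∀ i, 0 < tbar i := by
    intro i
    by_cases h : i = i0
    · rw [h]; exact (ht i0).trans hgt
    · rw [htbar i h]; exact ht i
  have herase : ∀ f₁ f₂ : Fin N → ℝ, (∀ i, i ≠ i0 → f₁ i = f₂ i) →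
      ∑ i ∈ Finset.univ.erase i0, f₁ i = ∑ i ∈ Finset.univ.erase i0, f₂ i := by
    intro f₁ f₂ h
    exact Finset.sum_congr rfl (fun i hi => h i (Finset.mem_erase.mp hi).1)
  have hsum_tbar : ∑ i, tbar i = T := by
    rw [← Finset.add_sum_erase _ tbar (Finset.mem_univ i0), htbar0,
      herase tbar t htbar]
    ring
  refine ⟨htbar_pos, hsum_tbar, ?_⟩
  -- decompose g
  have hgdecomp : ∀ i (s : ℝ), g i s =
      a₁ i * ((B * s) * ((2:ℝ) ^ ((d i 0 + d i 1) / (B * s)) - 1))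
      + (a₂ i - a₁ i) * ((B * s) * ((2:ℝ) ^ (d i 1 / (B * s)) - 1)) := by
    intro i s; rw [hg]; ring
  have hBt : 0 < B * t i0 := mul_pos hB (ht i0)
  have hBlt : B * t i0 < B * tbar i0 := mul_lt_mul_of_pos_left hgt hB
  have hg0 : g i0 (tbar i0) < g i0 (t i0) := by
    rw [hgdecomp, hgdecomp]
    have h1 := key_lt (x := d i0 0 + d i0 1) hd1 hBt hBlt
    have h2 := key_le (x := d i0 1) (hd i0 1) hBt hBlt
    have ha := ha₁ i0
    have hc : 0 ≤ a₂ i0 - a₁ i0 := sub_nonneg.mpr (h12 i0)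
    exact add_lt_add_of_lt_of_le
      (mul_lt_mul_of_pos_left h1 ha)
      (mul_le_mul_of_nonneg_left h2 hc)
  calc ∑ i, g i (tbar i)
      = g i0 (tbar i0) + ∑ i ∈ Finset.univ.erase i0, g i (tbar i) :=
        (Finset.add_sum_erase _ (fun i => g i (tbar i)) (Finset.mem_univ i0)).symm
    _ = g i0 (tbar i0) + ∑ i ∈ Finset.univ.erase i0, g i (t i) := by
        rw [herase (fun i => g i (tbar i)) (fun i => g i (t i))
          (fun i hi => by beta_reduce; rw [htbar i hi])]
    _ < g i0 (t i0) + ∑ i ∈ Finset.univ.erase i0, g i (t i) := by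
        exact add_lt_add_left hg0 _
    _ = ∑ i, g i (t i) :=
        Finset.add_sum_erase _ (fun i => g i (t i)) (Finset.mem_univ i0)
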